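/- Let f : ℝⁿ → ℝ satisfy ‖∇²f(x) − ∇²f(y)‖ ≤ (M₀ + M₁‖∇f(x)‖)·‖x−y‖ for all x, y, and fix x, g ∈ ℝⁿ with g ≠ 0. Set γ := (2‖g‖/(M₀ + M₁‖∇f(x)‖))^{1/2}. Then for all h with ‖h‖ ≤ γ, ‖∇f(x+h) − ∇f(x) − ∇²f(x)h‖ ≤ ‖g‖·‖h‖/γ. -/

import Mathlib

open scoped RealInnerProductSpace

theorem M0M1_smooth_gradient_normalized_smoothness {n : ℕ}
    (f : EuclideanSpace ℝ (Fin n) → ℝ) (hf : ContDiff ℝ 2 f)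
    (M₀ M₁ : ℝ) (hM₀ : 0 < M₀) (hM₁ : 0 < M₁)
    (hsmooth : ∀ x y : EuclideanSpace ℝ (Fin n),
      ‖fderiv ℝ (gradient f) x - fderiv ℝ (gradient f) y‖
        ≤ (M₀ + M₁ * ‖gradient f x‖) * ‖x - y‖)
    (x g : EuclideanSpace ℝ (Fin n)) (hg : g ≠ 0)
    (γ : ℝ)
    (hγ : γ = (2 * ‖g‖ / (M₀ + M₁ * ‖gradient f x‖)) ^ ((1 : ℝ) / 2)) :
    ∀ h : EuclideanSpace ℝ (Fin n), ‖h‖ ≤ γ →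
      ‖gradient f (x + h) - gradient f x - fderiv ℝ (gradient f) x h‖
        ≤ ‖g‖ * ‖h‖ / γ := by
  intro h hh
  set L := M₀ + M₁ * ‖gradient f x‖ with hL
  have hLpos : 0 < L := by
    have : 0 ≤ M₁ * ‖gradient f x‖ := mul_nonneg hM₁.le (norm_nonneg _)
    rw [hL]; linarith
  have hgpos : 0 < ‖g‖ := norm_pos_iff.mpr hg
  have hapos : 0 < 2 * ‖g‖ / L := by positivity
  have hγpos : 0 < γ := by rw [hγ]; exact Real.rpow_pos_of_pos hapos _
  have hγγ : γ * γ = 2 * ‖g‖ / L := by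
    rw [hγ, ← Real.rpow_add hapos]
    norm_num
  -- gradient f is C¹
  have hFc : ContDiff ℝ 1 (gradient f) := by
    have h1 : ContDiff ℝ 1 (fderiv ℝ f) := hf.fderiv_right (by norm_num)
    exact ((InnerProductSpace.toDual ℝ
      (EuclideanSpace ℝ (Fin n))).symm.contDiff).comp h1
  have hFdiff : Differentiable ℝ (gradient f) := hFc.differentiable one_ne_zero
  have hFderiv_cont : Continuous (fderiv ℝ (gradient f)) := hFc.continuous_fderiv one_ne_zero
  -- the path
  set φ' : ℝ → EuclideanSpace ℝ (Fin n) :=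
    fun t => fderiv ℝ (gradient f) (x + t • h) h with hφ'
  have hpath : ∀ t : ℝ, HasDerivAt (fun s : ℝ => gradient f (x + s • h)) (φ' t) t := by
    intro t
    have h1 : HasDerivAt (fun s : ℝ => x + s • h) h t := by
      simpa using ((hasDerivAt_id t).smul_const h).const_add x
    exact ((hFdiff (x + t • h)).hasFDerivAt).comp_hasDerivAt t h1
  have hlin : Continuous fun t : ℝ => x + t • h :=
    continuous_const.add (continuous_id.smul continuous_const)
  have hcont : Continuous φ' :=
    (hFderiv_cont.comp hlin).clm_apply continuous_const
  have hFTC : ∫ t in (0:ℝ)..1, φ' t = gradient f (x + h) - gradient f x := by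
    have := intervalIntegral.integral_eq_sub_of_hasDerivAt
      (f := fun s : ℝ => gradient f (x + s • h)) (f' := φ')
      (fun t _ => hpath t) (hcont.intervalIntegrable 0 1)
    simpa using this
  have hkey : ‖gradient f (x + h) - gradient f x - fderiv ℝ (gradient f) x h‖
      ≤ L / 2 * (‖h‖ * ‖h‖) := by
    have heq : gradient f (x + h) - gradient f x - fderiv ℝ (gradient f) x h
        = ∫ t in (0:ℝ)..1, (φ' t - fderiv ℝ (gradient f) x h) := by
      rw [intervalIntegral.integral_sub (hcont.intervalIntegrable 0 1)
        intervalIntegrable_const, hFTC]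
      simp
    rw [heq]
    have hbound : ∀ t ∈ Set.Icc (0:ℝ) 1,
        ‖φ' t - fderiv ℝ (gradient f) x h‖ ≤ L * ‖h‖ * ‖h‖ * t := by
      intro t ht
      have h1 : ‖φ' t - fderiv ℝ (gradient f) x h‖
          ≤ ‖fderiv ℝ (gradient f) (x + t • h) - fderiv ℝ (gradient f) x‖ * ‖h‖ := by
        have heq2 : φ' t - fderiv ℝ (gradient f) x h
            = (fderiv ℝ (gradient f) (x + t • h) - fderiv ℝ (gradient f) x) h := by
          simp [hφ']
        rw [heq2]
        exact (fderiv ℝ (gradient f) (x + t • h) - fderiv ℝ (gradient f) x).le_opNorm h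
      have h2 : ‖fderiv ℝ (gradient f) (x + t • h) - fderiv ℝ (gradient f) x‖
          ≤ L * (t * ‖h‖) := by
        have h3 := hsmooth x (x + t • h)
        rw [norm_sub_rev] at h3
        calc ‖fderiv ℝ (gradient f) (x + t • h) - fderiv ℝ (gradient f) x‖
            ≤ L * ‖x - (x + t • h)‖ := h3
          _ = L * (t * ‖h‖) := by
              rw [show x - (x + t • h) = -(t • h) by abel, norm_neg, norm_smul,
                Real.norm_eq_abs, abs_of_nonneg ht.1]
      calc ‖φ' t - fderiv ℝ (gradient f) x h‖ ≤ L * (t * ‖h‖) * ‖h‖ :=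
            h1.trans (by gcongr)
        _ = L * ‖h‖ * ‖h‖ * t := by ring
    calc ‖∫ t in (0:ℝ)..1, (φ' t - fderiv ℝ (gradient f) x h)‖
        ≤ ∫ t in (0:ℝ)..1, ‖φ' t - fderiv ℝ (gradient f) x h‖ :=
          intervalIntegral.norm_integral_le_integral_norm (by norm_num)
      _ ≤ ∫ t in (0:ℝ)..1, L * ‖h‖ * ‖h‖ * t := by
          apply intervalIntegral.integral_mono_on (by norm_num)
          · exact ((hcont.sub continuous_const).norm).intervalIntegrable 0 1
          · exact (by fun_prop :
              Continuous fun t : ℝ => L * ‖h‖ * ‖h‖ * t).intervalIntegrable 0 1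
          · exact hbound
      _ = L / 2 * (‖h‖ * ‖h‖) := by
          rw [show (fun t : ℝ => L * ‖h‖ * ‖h‖ * t) = fun t : ℝ => (L * ‖h‖ * ‖h‖) * t
            from rfl, intervalIntegral.integral_const_mul, integral_id]
          ring
  refine hkey.trans ?_
  have hgL : ‖g‖ = L * (γ * γ) / 2 := by
    field_simp at hγγ ⊢
    linarith [hγγ]
  rw [hgL]
  have hrhs : L * (γ * γ) / 2 * ‖h‖ / γ = L * γ * ‖h‖ / 2 := by
    field_simp
  rw [hrhs]
  nlinarith [mul_nonneg (mul_nonneg hLpos.le (sub_nonneg.mpr hh)) (norm_nonneg h)]
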